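/- Let X be a CAT(1) space, x and y points with d(x,y) = π, and let v₁, v₂ be two directions at x. Suppose γ^{v₁}, γ^{v₂} : [0,π] → X are geodesics from x to y with initial directions v₁, v₂ respectively, and suppose the angle between v₁ and v₂ at x is α. Then for all t ∈ [0,π], d(γ^{v₁}(t), γ^{v₂}(t)) ≤ the distance between the corresponding points on a spherical digon of angle α joining antipodal points in S². -/

import Mathlib

open Real Set Metric

noncomputable section

/-- `γ` restricted to the parameter set `s` is an isometric (unit-speed) embedding. -/
def IsGeodesicOn {X : Type*} [MetricSpace X] (γ : ℝ → X) (s : Set ℝ) : Prop :=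
  ∀ a ∈ s, ∀ b ∈ s, dist (γ a) (γ b) = |a - b|

/-- A geodesic segment parametrized on `[a,b]` from `x` to `y`. -/
def IsGeodesicSeg {X : Type*} [MetricSpace X] (γ : ℝ → X) (a b : ℝ) (x y : X) : Prop :=
  IsGeodesicOn γ (Set.Icc a b) ∧ γ a = x ∧ γ b = y

/-- A local geodesic parametrized on `[a,b]`. -/
def IsLocalGeodesic {X : Type*} [MetricSpace X] (γ : ℝ → X) (a b : ℝ) : Prop :=
  ∀ t ∈ Set.Icc a b, ∃ ε > 0, IsGeodesicOn γ (Set.Icc (t - ε) (t + ε) ∩ Set.Icc a b)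

/-- Any two points are joined by a geodesic. -/
def GeodesicSpace (X : Type*) [MetricSpace X] : Prop :=
  ∀ x y : X, ∃ γ : ℝ → X, IsGeodesicSeg γ 0 (dist x y) x y

/-- The distance in the unit 2-sphere from the vertex `P̄` of a spherical comparison
triangle with side lengths `a = d(Q,R)`, `b = d(R,P)`, `c = d(P,Q)` to the point at
arclength `t` along the side `Q̄R̄` (spherical law of cosines). -/
def sphCompDist (a b c t : ℝ) : ℝ :=
  Real.arccos (Real.cos c * Real.cos t +
    Real.sin c * Real.sin t *
      ((Real.cos b - Real.cos a * Real.cos c) / (Real.sin a * Real.sin c)))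

/-- CAT(1): distances < π are realized by geodesics, and geodesic triangles of
perimeter < 2π are at least as thin as their comparison triangles in the unit sphere. -/
def IsCAT1 (X : Type*) [MetricSpace X] : Prop :=
  (∀ x y : X, dist x y < π → ∃ γ : ℝ → X, IsGeodesicSeg γ 0 (dist x y) x y) ∧
  ∀ (p q r : X) (γ : ℝ → X), IsGeodesicSeg γ 0 (dist q r) q r →
    dist p q + dist q r + dist r p < 2 * π →
    ∀ t ∈ Set.Icc (0:ℝ) (dist q r),
      dist p (γ t) ≤ sphCompDist (dist q r) (dist r p) (dist p q) t

/-- CAT(0): geodesic space satisfying the CN (midpoint) comparison inequality. -/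
def IsCAT0 (X : Type*) [MetricSpace X] : Prop :=
  GeodesicSpace X ∧
  ∀ p q r m : X, dist q m = dist q r / 2 → dist m r = dist q r / 2 →
    dist p m ^ 2 ≤ (dist p q ^ 2 + dist p r ^ 2) / 2 - dist q r ^ 2 / 4

/-- Euclidean comparison angle at `x` of the points `p`, `q`. -/
def compAngle {X : Type*} [MetricSpace X] (x p q : X) : ℝ :=
  Real.arccos ((dist x p ^ 2 + dist x q ^ 2 - dist p q ^ 2) / (2 * dist x p * dist x q))

/-- The Alexandrov (upper) angle at `x` between two curves `γ`, `σ` emanating from `x`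
(parametrized with `γ 0 = σ 0 = x`). -/
def alexAngle {X : Type*} [MetricSpace X] (x : X) (γ σ : ℝ → X) : ℝ :=
  ⨅ ε : {ε : ℝ // 0 < ε}, ⨆ s ∈ Set.Ioc (0:ℝ) ε.1, ⨆ t ∈ Set.Ioc (0:ℝ) ε.1,
    compAngle x (γ s) (σ t)

/-- Distance between the points of parameter `t` on the two sides of a spherical digon
of angle `α` joining antipodal points of the unit 2-sphere. -/
noncomputable def digonDist (α t : ℝ) : ℝ :=
  Real.arccos (Real.cos t ^ 2 + Real.sin t ^ 2 * Real.cos α)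

namespace DigonAux

open Filter Topology

variable {X : Type*} [MetricSpace X]

lemma gd {γ : ℝ → X} {x y : X} (h : IsGeodesicSeg γ 0 π x y) {a b : ℝ}
    (ha0 : 0 ≤ a) (haπ : a ≤ π) (hb0 : 0 ≤ b) (hbπ : b ≤ π) :
    dist (γ a) (γ b) = |a - b| := h.1 a ⟨ha0, haπ⟩ b ⟨hb0, hbπ⟩

lemma gdx {γ : ℝ → X} {x y : X} (h : IsGeodesicSeg γ 0 π x y) {a : ℝ}
    (ha0 : 0 ≤ a) (haπ : a ≤ π) : dist x (γ a) = a := by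
  have h0 := gd h le_rfl Real.pi_pos.le ha0 haπ
  rw [h.2.1] at h0
  rw [h0, abs_sub_comm, sub_zero, abs_of_nonneg ha0]

lemma gdy {γ : ℝ → X} {x y : X} (h : IsGeodesicSeg γ 0 π x y) {a : ℝ}
    (ha0 : 0 ≤ a) (haπ : a ≤ π) : dist (γ a) y = π - a := by
  have h0 := gd h ha0 haπ Real.pi_pos.le le_rfl
  rw [h.2.2] at h0
  rw [h0, abs_of_nonpos (by linarith), neg_sub]

lemma arccos_le_arccos' {a b : ℝ} (h : a ≤ b) : Real.arccos b ≤ Real.arccos a := by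
  rw [Real.arccos_eq_pi_div_two_sub_arcsin, Real.arccos_eq_pi_div_two_sub_arcsin]
  have := Real.monotone_arcsin h
  linarith

lemma cos_ge_of_le_arccos {d E : ℝ} (hd : 0 ≤ d) (hE1 : -1 ≤ E) (hE2 : E ≤ 1)
    (h : d ≤ Real.arccos E) : E ≤ Real.cos d := by
  have h2 := Real.cos_le_cos_of_nonneg_of_le_pi hd (Real.arccos_le_pi E) h
  rwa [Real.cos_arccos hE1 hE2] at h2

/-- The fundamental CAT(1) comparison applied to the triangle with apex `p` and the
side running from `y` backwards along the geodesic `γ` to `γ s`, evaluated at `γ u`. -/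
lemma compY (hcat : IsCAT1 X) {x y : X} {γ : ℝ → X} (hγ : IsGeodesicSeg γ 0 π x y)
    (p : X) {s u w : ℝ} (hs0 : 0 ≤ s) (hsu : s ≤ u) (hu : u ≤ π)
    (hpy : dist p y = π - w)
    (hper : (π - w) + (π - s) + dist (γ s) p < 2 * π) :
    dist p (γ u) ≤ Real.arccos (Real.cos w * Real.cos u + Real.sin w * Real.sin u *
      ((Real.cos (dist (γ s) p) - Real.cos s * Real.cos w) / (Real.sin s * Real.sin w))) := by
  have hyy : γ π = y := hγ.2.2
  have hsπ : s ≤ π := hsu.trans hu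
  have hdyr : dist y (γ s) = π - s := by
    have h0 := gd hγ Real.pi_pos.le le_rfl hs0 hsπ
    rw [hyy] at h0
    rw [h0, abs_of_nonneg (by linarith)]
  have hseg : IsGeodesicSeg (fun v => γ (π - v)) 0 (dist y (γ s)) y (γ s) := by
    rw [hdyr]
    refine ⟨?_, by simp [hyy], by simp⟩
    intro a ha b hb
    have h1 := gd hγ (by linarith [ha.2] : (0:ℝ) ≤ π - a) (by linarith [ha.1])
      (by linarith [hb.2] : (0:ℝ) ≤ π - b) (by linarith [hb.1])
    calc dist (γ (π - a)) (γ (π - b)) = |π - a - (π - b)| := h1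
    _ = |a - b| := by rw [show π - a - (π - b) = -(a - b) by ring, abs_neg]
  have hmem : π - u ∈ Set.Icc (0:ℝ) (dist y (γ s)) := by
    rw [hdyr]; exact ⟨by linarith, by linarith⟩
  have hper' : dist p y + dist y (γ s) + dist (γ s) p < 2 * π := by
    rw [hpy, hdyr]; linarith
  have hmain := hcat.2 p y (γ s) _ hseg hper' (π - u) hmem
  simp only [show π - (π - u) = u by ring] at hmain
  rw [hdyr, hpy] at hmain
  refine le_trans hmain (le_of_eq ?_)
  unfold sphCompDist
  simp only [Real.cos_pi_sub, Real.sin_pi_sub]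
  congr 1
  ring

def SS (x : X) (γ σ : ℝ → X) (e : ℝ) : ℝ :=
  ⨆ s ∈ Set.Ioc (0:ℝ) e, ⨆ u ∈ Set.Ioc (0:ℝ) e, compAngle x (γ s) (σ u)

lemma alexAngle_eq (x : X) (γ σ : ℝ → X) :
    alexAngle x γ σ = ⨅ ε : {ε : ℝ // 0 < ε}, SS x γ σ ε.1 := rfl

lemma SS_nonneg (x : X) (γ σ : ℝ → X) (e : ℝ) : 0 ≤ SS x γ σ e :=
  Real.iSup_nonneg fun _ => Real.iSup_nonneg fun _ => Real.iSup_nonneg fun _ =>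
    Real.iSup_nonneg fun _ => Real.arccos_nonneg _

lemma SS_le_pi (x : X) (γ σ : ℝ → X) (e : ℝ) : SS x γ σ e ≤ π :=
  Real.iSup_le (fun _ => Real.iSup_le (fun _ => Real.iSup_le (fun _ => Real.iSup_le
    (fun _ => Real.arccos_le_pi _) Real.pi_pos.le) Real.pi_pos.le) Real.pi_pos.le) Real.pi_pos.le

lemma le_SS {x : X} {γ σ : ℝ → X} {e : ℝ} {s u : ℝ}
    (hs : s ∈ Set.Ioc (0:ℝ) e) (hu : u ∈ Set.Ioc (0:ℝ) e) :
    compAngle x (γ s) (σ u) ≤ SS x γ σ e := by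
  have hinner : ∀ s' : ℝ, (⨆ _ : s' ∈ Set.Ioc (0:ℝ) e,
      ⨆ u' ∈ Set.Ioc (0:ℝ) e, compAngle x (γ s') (σ u')) ≤ π :=
    fun s' => Real.iSup_le (fun _ => Real.iSup_le (fun u' => Real.iSup_le
      (fun _ => Real.arccos_le_pi _) Real.pi_pos.le) Real.pi_pos.le) Real.pi_pos.le
  have h1 : compAngle x (γ s) (σ u) ≤ ⨆ u' ∈ Set.Ioc (0:ℝ) e, compAngle x (γ s) (σ u') := by
    have h2 : ∀ u' : ℝ, (⨆ _ : u' ∈ Set.Ioc (0:ℝ) e, compAngle x (γ s) (σ u')) ≤ π :=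
      fun u' => Real.iSup_le (fun _ => Real.arccos_le_pi _) Real.pi_pos.le
    calc compAngle x (γ s) (σ u)
        = ⨆ _ : u ∈ Set.Ioc (0:ℝ) e, compAngle x (γ s) (σ u) :=
          (ciSup_pos (f := fun _ => compAngle x (γ s) (σ u)) hu).symm
      _ ≤ ⨆ u' ∈ Set.Ioc (0:ℝ) e, compAngle x (γ s) (σ u') :=
          le_ciSup ⟨π, by rintro _ ⟨u', rfl⟩; exact h2 u'⟩ u
  calc compAngle x (γ s) (σ u)
      ≤ ⨆ u' ∈ Set.Ioc (0:ℝ) e, compAngle x (γ s) (σ u') := h1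
    _ = ⨆ _ : s ∈ Set.Ioc (0:ℝ) e, ⨆ u' ∈ Set.Ioc (0:ℝ) e, compAngle x (γ s) (σ u') :=
        (ciSup_pos (f := fun _ => ⨆ u' ∈ Set.Ioc (0:ℝ) e, compAngle x (γ s) (σ u')) hs).symm
    _ ≤ SS x γ σ e := le_ciSup ⟨π, by rintro _ ⟨s', rfl⟩; exact hinner s'⟩ s

lemma alexAngle_nonneg (x : X) (γ σ : ℝ → X) : 0 ≤ alexAngle x γ σ := by
  rw [alexAngle_eq]
  exact le_ciInf fun ε => SS_nonneg x γ σ ε.1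

lemma alexAngle_le_pi (x : X) (γ σ : ℝ → X) : alexAngle x γ σ ≤ π := by
  rw [alexAngle_eq]
  have hbdd : BddBelow (Set.range fun ε : {ε : ℝ // 0 < ε} => SS x γ σ ε.1) := by
    refine ⟨0, ?_⟩
    rintro _ ⟨ε, rfl⟩
    exact SS_nonneg x γ σ ε.1
  exact le_trans (ciInf_le hbdd ⟨1, one_pos⟩) (SS_le_pi x γ σ 1)

lemma exists_small {x : X} {γ σ : ℝ → X} {α β : ℝ} (h : alexAngle x γ σ = α) (hβ : α < β) :
    ∃ ε > 0, ∀ s u : ℝ, s ∈ Set.Ioc (0:ℝ) ε → u ∈ Set.Ioc (0:ℝ) ε →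
      compAngle x (γ s) (σ u) ≤ β := by
  rw [alexAngle_eq] at h
  have h2 : ⨅ ε : {ε : ℝ // 0 < ε}, SS x γ σ ε.1 < β := by rw [h]; exact hβ
  obtain ⟨ε, hε⟩ := exists_lt_of_ciInf_lt h2
  exact ⟨ε.1, ε.2, fun s u hs hu => (le_SS hs hu).trans hε.le⟩

lemma slope_sin (m : ℝ) :
    Tendsto (fun s : ℝ => Real.sin (s * m) / s) (𝓝[≠] (0:ℝ)) (𝓝 m) := by
  have hd : HasDerivAt (fun s : ℝ => Real.sin (s * m)) m 0 := by
    have h2 : HasDerivAt (fun s : ℝ => s * m) m 0 := hasDerivAt_mul_const m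
    have h3 := (Real.hasDerivAt_sin (0 * m)).comp 0 h2
    simpa [Function.comp_def] using h3
  have h4 := hasDerivAt_iff_tendsto_slope.mp hd
  refine Filter.Tendsto.congr (fun s => ?_) h4
  rw [slope_def_field]
  simp

lemma tendsto_aux (m : ℝ) :
    Tendsto (fun s : ℝ => 1 - 2 * Real.sin (s * m) ^ 2 / Real.sin s ^ 2)
      (𝓝[>] (0:ℝ)) (𝓝 (1 - 2 * m ^ 2)) := by
  have h5 : Tendsto (fun s : ℝ => Real.sin s / s) (𝓝[≠] (0:ℝ)) (𝓝 1) := by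
    have := slope_sin 1
    simpa using this
  have h7 : Tendsto (fun s : ℝ => (Real.sin (s * m) / s) * (Real.sin s / s)⁻¹)
      (𝓝[≠] (0:ℝ)) (𝓝 (m * 1⁻¹)) := (slope_sin m).mul (h5.inv₀ one_ne_zero)
  have hsub : (𝓝[>] (0:ℝ)) ≤ (𝓝[≠] (0:ℝ)) :=
    nhdsWithin_mono 0 (fun z hz => by simpa using ne_of_gt hz)
  have h8 := h7.mono_left hsub
  have h9 : Tendsto (fun s : ℝ => Real.sin (s * m) / Real.sin s) (𝓝[>] (0:ℝ)) (𝓝 m) := by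
    have hev : ∀ᶠ s in (𝓝[>] (0:ℝ)),
        (Real.sin (s * m) / s) * (Real.sin s / s)⁻¹ = Real.sin (s * m) / Real.sin s := by
      filter_upwards [Ioo_mem_nhdsGT_of_mem (Set.mem_Ico.mpr ⟨le_rfl, Real.pi_pos⟩)] with z hz
      have hz0 : z ≠ 0 := ne_of_gt hz.1
      have hzsin : Real.sin z ≠ 0 := ne_of_gt (Real.sin_pos_of_pos_of_lt_pi hz.1 hz.2)
      field_simp
    simpa using Filter.Tendsto.congr' (Filter.Eventually.mono hev fun z h => h) h8
  have h10 : Tendsto (fun s : ℝ => 1 - 2 * (Real.sin (s * m) / Real.sin s) ^ 2)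
      (𝓝[>] (0:ℝ)) (𝓝 (1 - 2 * m ^ 2)) :=
    tendsto_const_nhds.sub ((h9.pow 2).const_mul 2)
  refine h10.congr fun s => ?_
  rw [div_pow]
  ring


/- tiny arithmetic helpers, kept separate so that `nlinarith` works in a small context -/

lemma ar_sq_le {d s : ℝ} (hd0 : 0 ≤ d) (hd : d ≤ s + s) : d ^ 2 ≤ 4 * s ^ 2 := by nlinarith

lemma ar_sq_bound {d s m : ℝ} (h : (1 - 2 * m ^ 2) * (2 * s ^ 2) ≤ 2 * s ^ 2 - d ^ 2) :
    d ^ 2 ≤ (2 * (s * m)) ^ 2 := by nlinarith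

lemma ar_le_of_sq_le {d e : ℝ} (h : d ^ 2 ≤ e ^ 2) (hd : 0 ≤ d) (he : 0 ≤ e) : d ≤ e := by
  nlinarith

lemma ar_lt_two_s {d s m : ℝ} (h : d ≤ 2 * (s * m)) (hm1 : m < 1) (hs : 0 < s) : d < 2 * s := by
  nlinarith

lemma ar_two_sm_le_pi {s m : ℝ} (hm1 : m < 1) (hm0 : 0 < m) (hs : 0 < s) (hs2 : s ≤ π / 2) :
    2 * (s * m) ≤ π := by nlinarith [Real.pi_pos]

lemma ar_E1gt {A P c : ℝ} (hP : 0 < P) (hc : -1 < c) : A - P < A + P * c := by nlinarith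

lemma ar_E1le {A P c : ℝ} (h : A + P ≤ 1) (hP : 0 < P) (hc : c ≤ 1) : A + P * c ≤ 1 := by
  nlinarith

lemma ar_finm1 {A P c : ℝ} (h : -1 ≤ A - P) (hP : 0 ≤ P) (hc : -1 ≤ c) : -1 ≤ A + P * c := by
  nlinarith

lemma ar_mono {A P L c D : ℝ} (h : A + P * c ≤ D) (hL : L ≤ c) (hP : 0 ≤ P) :
    A + P * L ≤ D := by nlinarith

end DigonAux

open Filter Topology in
set_option maxHeartbeats 2000000 in
/-- In a CAT(1) space, two unit-speed geodesics of length π from `x` to `y`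
making Alexandrov angle `α` at `x` satisfy the spherical digon comparison inequality. -/
theorem digon_comparison
    {X : Type*} [MetricSpace X] (hcat : IsCAT1 X)
    (x y : X) (hxy : dist x y = π)
    (γ₁ γ₂ : ℝ → X) (h₁ : IsGeodesicSeg γ₁ 0 π x y) (h₂ : IsGeodesicSeg γ₂ 0 π x y)
    (α : ℝ) (hα : alexAngle x γ₁ γ₂ = α) :
    ∀ t ∈ Set.Icc (0:ℝ) π, dist (γ₁ t) (γ₂ t) ≤ digonDist α t := by
  intro t ht
  obtain ⟨ht0, htπ⟩ := ht
  rcases eq_or_lt_of_le ht0 with h0 | ht0'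
  · have heq : γ₁ t = γ₂ t := by rw [← h0, h₁.2.1, h₂.2.1]
    rw [heq, dist_self]
    exact Real.arccos_nonneg _
  rcases eq_or_lt_of_le htπ with hπ | htπ'
  · have heq : γ₁ t = γ₂ t := by rw [hπ, h₁.2.2, h₂.2.2]
    rw [heq, dist_self]
    exact Real.arccos_nonneg _
  -- main case : 0 < t < π
  have hsint : 0 < Real.sin t := Real.sin_pos_of_pos_of_lt_pi ht0' htπ'
  have hα0 : 0 ≤ α := hα ▸ DigonAux.alexAngle_nonneg x γ₁ γ₂
  have hαπ : α ≤ π := hα ▸ DigonAux.alexAngle_le_pi x γ₁ γ₂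
  have hgx1 : dist x (γ₁ t) = t := DigonAux.gdx h₁ ht0 htπ
  have hgx2 : dist x (γ₂ t) = t := DigonAux.gdx h₂ ht0 htπ
  have hgy1 : dist (γ₁ t) y = π - t := DigonAux.gdy h₁ ht0 htπ
  have hgy2 : dist (γ₂ t) y = π - t := DigonAux.gdy h₂ ht0 htπ
  have hd2t : dist (γ₁ t) (γ₂ t) ≤ 2 * t := by
    have h5 := dist_triangle (γ₁ t) x (γ₂ t)
    rw [dist_comm (γ₁ t) x, hgx1, hgx2] at h5
    linarith
  have hd2πt : dist (γ₁ t) (γ₂ t) ≤ 2 * π - 2 * t := by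
    have h5 := dist_triangle (γ₁ t) y (γ₂ t)
    rw [dist_comm y (γ₂ t), hgy1, hgy2] at h5
    linarith
  have hdπ : dist (γ₁ t) (γ₂ t) ≤ π := by
    rcases le_total t (π / 2) with h | h
    · linarith
    · linarith
  suffices hkey : Real.cos t ^ 2 + Real.sin t ^ 2 * Real.cos α ≤
      Real.cos (dist (γ₁ t) (γ₂ t)) by
    unfold digonDist
    calc dist (γ₁ t) (γ₂ t)
        = Real.arccos (Real.cos (dist (γ₁ t) (γ₂ t))) :=
          (Real.arccos_cos dist_nonneg hdπ).symm
      _ ≤ Real.arccos (Real.cos t ^ 2 + Real.sin t ^ 2 * Real.cos α) :=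
          DigonAux.arccos_le_arccos' hkey
  rcases eq_or_lt_of_le hαπ with hαeq | hαlt
  · -- the degenerate case α = π
    rw [hαeq, Real.cos_pi]
    have hc2t : Real.cos t ^ 2 + Real.sin t ^ 2 * (-1) = Real.cos (2 * t) := by
      linear_combination -Real.cos_two_mul t - Real.sin_sq_add_cos_sq t
    rw [hc2t]
    rcases le_total (2 * t) π with h | h
    · exact Real.cos_le_cos_of_nonneg_of_le_pi dist_nonneg h hd2t
    · have h6 := Real.cos_le_cos_of_nonneg_of_le_pi dist_nonneg
        (by linarith : 2 * π - 2 * t ≤ π) hd2πt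
      rwa [Real.cos_two_pi_sub] at h6
  -- main case α < π
  have hδstep : ∀ δ ∈ Set.Ioo (0:ℝ) (π - α),
      Real.cos t ^ 2 + Real.sin t ^ 2 * Real.cos (α + δ) ≤
        Real.cos (dist (γ₁ t) (γ₂ t)) := by
    intro δ hδ
    obtain ⟨hδ0, hδπ⟩ := hδ
    have hβ0 : 0 < α + δ := by linarith
    have hβπ : α + δ < π := by linarith
    obtain ⟨ε, hε0, hεsmall⟩ := DigonAux.exists_small hα (show α < α + δ by linarith)
    set m : ℝ := Real.sin ((α + δ) / 2) with hmdef
    have hm0 : 0 < m := Real.sin_pos_of_pos_of_lt_pi (by linarith) (by linarith [Real.pi_pos])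
    have hm1 : m < 1 := by
      have h7 : Real.sin ((α + δ) / 2) < Real.sin (π / 2) :=
        Real.strictMonoOn_sin ⟨by linarith, by linarith⟩
          ⟨by linarith [Real.pi_pos], le_rfl⟩ (by linarith)
      rwa [Real.sin_pi_div_two] at h7
    have h1m2 : 1 - 2 * m ^ 2 = Real.cos (α + δ) := by
      have hcalc := Real.cos_two_mul ((α + δ) / 2)
      rw [show 2 * ((α + δ) / 2) = α + δ by ring] at hcalc
      rw [hmdef]
      linear_combination -hcalc - 2 * Real.sin_sq_add_cos_sq ((α + δ) / 2)
    set ε' : ℝ := min ε (min t (min (π - t) (π / 2))) with hε'def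
    have hε'0 : 0 < ε' := by
      refine lt_min hε0 (lt_min ht0' (lt_min (by linarith) (by linarith [Real.pi_pos])))
    have key : ∀ s ∈ Set.Ioc (0:ℝ) ε',
        Real.cos t ^ 2 + Real.sin t ^ 2 * (1 - 2 * Real.sin (s * m) ^ 2 / Real.sin s ^ 2) ≤
          Real.cos (dist (γ₁ t) (γ₂ t)) := by
      intro s hs
      obtain ⟨hs0, hsle⟩ := hs
      have hsε : s ≤ ε := hsle.trans (min_le_left _ _)
      have hst : s ≤ t := hsle.trans ((min_le_right _ _).trans (min_le_left _ _))
      have hsπt : s ≤ π - t :=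
        hsle.trans ((min_le_right _ _).trans ((min_le_right _ _).trans (min_le_left _ _)))
      have hs2 : s ≤ π / 2 :=
        hsle.trans ((min_le_right _ _).trans ((min_le_right _ _).trans (min_le_right _ _)))
      have hsπ : s < π := by linarith [Real.pi_pos]
      have hsins : 0 < Real.sin s := Real.sin_pos_of_pos_of_lt_pi hs0 hsπ
      have dxg1 : dist x (γ₁ s) = s := DigonAux.gdx h₁ hs0.le hsπ.le
      have dxg2 : dist x (γ₂ s) = s := DigonAux.gdx h₂ hs0.le hsπ.le
      have dy1 : dist (γ₁ s) y = π - s := DigonAux.gdy h₁ hs0.le hsπ.le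
      -- small scale: d(γ₁ s, γ₂ s) ≤ 2 s m
      have hbub : dist (γ₁ s) (γ₂ s) ≤ s + s := by
        have h8 := dist_triangle (γ₁ s) x (γ₂ s)
        rw [dist_comm (γ₁ s) x, dxg1, dxg2] at h8
        linarith
      have hQ : compAngle x (γ₁ s) (γ₂ s) ≤ α + δ :=
        hεsmall s s ⟨hs0, hsε⟩ ⟨hs0, hsε⟩
      have hQval : (dist x (γ₁ s) ^ 2 + dist x (γ₂ s) ^ 2 - dist (γ₁ s) (γ₂ s) ^ 2) /
          (2 * dist x (γ₁ s) * dist x (γ₂ s)) =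
          (2 * s ^ 2 - dist (γ₁ s) (γ₂ s) ^ 2) / (2 * s ^ 2) := by
        rw [dxg1, dxg2]
        ring_nf
      have hQ1 : (2 * s ^ 2 - dist (γ₁ s) (γ₂ s) ^ 2) / (2 * s ^ 2) ≤ 1 := by
        rw [div_le_one (by positivity)]
        linarith [sq_nonneg (dist (γ₁ s) (γ₂ s))]
      have hQm1 : -1 ≤ (2 * s ^ 2 - dist (γ₁ s) (γ₂ s) ^ 2) / (2 * s ^ 2) := by
        rw [le_div_iff₀ (by positivity)]
        linarith [DigonAux.ar_sq_le (dist_nonneg (x := γ₁ s) (y := γ₂ s)) hbub]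
      have hqb : Real.cos (α + δ) ≤ (2 * s ^ 2 - dist (γ₁ s) (γ₂ s) ^ 2) / (2 * s ^ 2) := by
        have h9 : Real.arccos ((2 * s ^ 2 - dist (γ₁ s) (γ₂ s) ^ 2) / (2 * s ^ 2)) ≤ α + δ := by
          unfold compAngle at hQ
          rwa [hQval] at hQ
        have h10 := Real.cos_le_cos_of_nonneg_of_le_pi (Real.arccos_nonneg _) hβπ.le h9
        rwa [Real.cos_arccos hQm1 hQ1] at h10
      have hb2sm : dist (γ₁ s) (γ₂ s) ≤ 2 * (s * m) := by
        have h11 : Real.cos (α + δ) * (2 * s ^ 2) ≤ 2 * s ^ 2 - dist (γ₁ s) (γ₂ s) ^ 2 :=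
          (le_div_iff₀ (by positivity)).mp hqb
        rw [← h1m2] at h11
        exact DigonAux.ar_le_of_sq_le (DigonAux.ar_sq_bound h11) dist_nonneg
          (by positivity)
      have hblt : dist (γ₁ s) (γ₂ s) < 2 * s := DigonAux.ar_lt_two_s hb2sm hm1 hs0
      have hbπ2 : dist (γ₁ s) (γ₂ s) ≤ π := by linarith
      -- step I
      have hper1 : (π - s) + (π - s) + dist (γ₂ s) (γ₁ s) < 2 * π := by
        rw [dist_comm]; linarith
      have hI := DigonAux.compY hcat h₂ (γ₁ s) hs0.le hst htπ'.le dy1 hper1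
      rw [dist_comm (γ₂ s) (γ₁ s)] at hI
      -- bounds on c₁
      have hcb : Real.cos (2 * (s * m)) ≤ Real.cos (dist (γ₁ s) (γ₂ s)) :=
        Real.cos_le_cos_of_nonneg_of_le_pi dist_nonneg
          (DigonAux.ar_two_sm_le_pi hm1 hm0 hs0 hs2) hb2sm
      have hc1low : 1 - 2 * Real.sin (s * m) ^ 2 / Real.sin s ^ 2 ≤
          (Real.cos (dist (γ₁ s) (γ₂ s)) - Real.cos s * Real.cos s) /
            (Real.sin s * Real.sin s) := by
        have hcos2sm : Real.cos (2 * (s * m)) = 1 - 2 * Real.sin (s * m) ^ 2 := by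
          linear_combination Real.cos_two_mul (s * m) + 2 * Real.sin_sq_add_cos_sq (s * m)
        have hnum : Real.cos (2 * (s * m)) - Real.cos s * Real.cos s =
            Real.sin s * Real.sin s - 2 * Real.sin (s * m) ^ 2 := by
          linear_combination hcos2sm - Real.sin_sq_add_cos_sq s
        calc 1 - 2 * Real.sin (s * m) ^ 2 / Real.sin s ^ 2
            = (Real.cos (2 * (s * m)) - Real.cos s * Real.cos s) /
              (Real.sin s * Real.sin s) := by
              rw [hnum]
              field_simp
          _ ≤ _ := (div_le_div_iff_of_pos_right (by positivity)).mpr (by linarith)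
      have hc1m1 : -1 < (Real.cos (dist (γ₁ s) (γ₂ s)) - Real.cos s * Real.cos s) /
          (Real.sin s * Real.sin s) := by
        have h13 : Real.cos (2 * s) < Real.cos (dist (γ₁ s) (γ₂ s)) :=
          Real.strictAntiOn_cos ⟨dist_nonneg, hbπ2⟩ ⟨by linarith, by linarith⟩ hblt
        rw [show (2:ℝ) * s = s + s by ring, Real.cos_add] at h13
        rw [lt_div_iff₀ (by positivity)]
        linarith
      have hc11 : (Real.cos (dist (γ₁ s) (γ₂ s)) - Real.cos s * Real.cos s) /
          (Real.sin s * Real.sin s) ≤ 1 := by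
        have hpyth : Real.sin s * Real.sin s + Real.cos s * Real.cos s = 1 := by
          linear_combination Real.sin_sq_add_cos_sq s
        rw [div_le_one (by positivity)]
        linarith [Real.cos_le_one (dist (γ₁ s) (γ₂ s))]
      set c₁ : ℝ := (Real.cos (dist (γ₁ s) (γ₂ s)) - Real.cos s * Real.cos s) /
          (Real.sin s * Real.sin s) with hc₁def
      have hE1gt : Real.cos (s + t) <
          Real.cos s * Real.cos t + Real.sin s * Real.sin t * c₁ := by
        rw [Real.cos_add]
        exact DigonAux.ar_E1gt (mul_pos hsins hsint) hc1m1
      have hE1le : Real.cos s * Real.cos t + Real.sin s * Real.sin t * c₁ ≤ 1 := by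
        have hco := Real.cos_le_one (s - t)
        rw [Real.cos_sub] at hco
        exact DigonAux.ar_E1le (by linarith) (mul_pos hsins hsint) hc11
      have hE1m1 : -1 ≤ Real.cos s * Real.cos t + Real.sin s * Real.sin t * c₁ :=
        le_trans (Real.neg_one_le_cos (s + t)) hE1gt.le
      have hdstcos : Real.cos s * Real.cos t + Real.sin s * Real.sin t * c₁ ≤
          Real.cos (dist (γ₁ s) (γ₂ t)) :=
        DigonAux.cos_ge_of_le_arccos dist_nonneg hE1m1 hE1le hI
      have hdlt : dist (γ₁ s) (γ₂ t) < s + t := by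
        have h14 : Real.arccos (Real.cos s * Real.cos t + Real.sin s * Real.sin t * c₁) <
            Real.arccos (Real.cos (s + t)) :=
          Real.strictAntiOn_arccos ⟨Real.neg_one_le_cos _, Real.cos_le_one _⟩
            ⟨hE1m1, hE1le⟩ hE1gt
        rw [Real.arccos_cos (by linarith) (by linarith)] at h14
        exact lt_of_le_of_lt hI h14
      -- step II
      have hper2 : (π - t) + (π - s) + dist (γ₁ s) (γ₂ t) < 2 * π := by linarith
      have hII := DigonAux.compY hcat h₁ (γ₂ t) hs0.le hst htπ'.le hgy2 hper2
      have hc2ge : c₁ ≤ (Real.cos (dist (γ₁ s) (γ₂ t)) - Real.cos s * Real.cos t) /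
          (Real.sin s * Real.sin t) := by
        rw [le_div_iff₀ (by positivity)]
        linarith [hdstcos, mul_comm c₁ (Real.sin s * Real.sin t)]
      have hc2le1 : (Real.cos (dist (γ₁ s) (γ₂ t)) - Real.cos s * Real.cos t) /
          (Real.sin s * Real.sin t) ≤ 1 := by
        have h15 := abs_dist_sub_le (γ₁ s) (γ₂ t) x
        rw [dist_comm (γ₁ s) x, dist_comm (γ₂ t) x, dxg1, hgx2] at h15
        have h16 : t - s ≤ dist (γ₁ s) (γ₂ t) := by
          calc t - s ≤ |s - t| := by rw [abs_sub_comm]; exact le_abs_self _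
            _ ≤ dist (γ₁ s) (γ₂ t) := h15
        have h17 : Real.cos (dist (γ₁ s) (γ₂ t)) ≤ Real.cos (t - s) :=
          Real.cos_le_cos_of_nonneg_of_le_pi (by linarith)
            (by linarith : dist (γ₁ s) (γ₂ t) ≤ π) h16
        rw [Real.cos_sub] at h17
        rw [div_le_one (by positivity)]
        linarith [mul_comm (Real.cos t) (Real.cos s), mul_comm (Real.sin t) (Real.sin s)]
      set c₂ : ℝ := (Real.cos (dist (γ₁ s) (γ₂ t)) - Real.cos s * Real.cos t) /
          (Real.sin s * Real.sin t) with hc₂def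
      have hfinm1 : -1 ≤ Real.cos t * Real.cos t + Real.sin t * Real.sin t * c₂ := by
        have h18 := Real.neg_one_le_cos (t + t)
        rw [Real.cos_add] at h18
        exact DigonAux.ar_finm1 h18 (mul_pos hsint hsint).le
          (le_of_lt (hc1m1.trans_le hc2ge))
      have hfin1 : Real.cos t * Real.cos t + Real.sin t * Real.sin t * c₂ ≤ 1 := by
        have hpyth : Real.sin t * Real.sin t + Real.cos t * Real.cos t = 1 := by
          linear_combination Real.sin_sq_add_cos_sq t
        exact DigonAux.ar_E1le (by linarith) (mul_pos hsint hsint) hc2le1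
      have hfincos : Real.cos t * Real.cos t + Real.sin t * Real.sin t * c₂ ≤
          Real.cos (dist (γ₂ t) (γ₁ t)) :=
        DigonAux.cos_ge_of_le_arccos dist_nonneg hfinm1 hfin1 hII
      rw [dist_comm (γ₂ t) (γ₁ t)] at hfincos
      rw [pow_two (Real.cos t), pow_two (Real.sin t)]
      exact DigonAux.ar_mono hfincos (hc1low.trans hc2ge) (mul_pos hsint hsint).le
    -- pass to the limit s → 0⁺
    have hlim : Tendsto
        (fun s : ℝ => Real.cos t ^ 2 + Real.sin t ^ 2 *
          (1 - 2 * Real.sin (s * m) ^ 2 / Real.sin s ^ 2))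
        (𝓝[>] (0:ℝ)) (𝓝 (Real.cos t ^ 2 + Real.sin t ^ 2 * (1 - 2 * m ^ 2))) :=
      tendsto_const_nhds.add ((DigonAux.tendsto_aux m).const_mul _)
    have hle := le_of_tendsto hlim
      (Filter.eventually_of_mem (Ioc_mem_nhdsGT_of_mem ⟨le_rfl, hε'0⟩) key)
    rwa [h1m2] at hle
  -- pass to the limit δ → 0⁺
  have houter : Tendsto (fun δ : ℝ => Real.cos t ^ 2 + Real.sin t ^ 2 * Real.cos (α + δ))
      (𝓝[>] (0:ℝ)) (𝓝 (Real.cos t ^ 2 + Real.sin t ^ 2 * Real.cos α)) := by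
    have hcont : Continuous fun δ : ℝ => Real.cos t ^ 2 + Real.sin t ^ 2 * Real.cos (α + δ) := by
      continuity
    have h18 := hcont.tendsto 0
    simp only [add_zero] at h18
    exact h18.mono_left nhdsWithin_le_nhds
  exact le_of_tendsto houter
    (Filter.eventually_of_mem (Ioo_mem_nhdsGT_of_mem ⟨le_rfl, by linarith⟩) hδstep)
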